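/- Let d ≥ 2, i ∈ ℤ^d and r ≥ π_d^{−1/d}. Then for every z ∈ B_i(r) and every y ∈ ℝ^d \ B_i(β_d·r) one has |z − y| > r; in particular ρ(B_i(r), ℝ^d \ B_i(β_d·r)) > r whenever both sets are nonempty. -/

import Mathlib

open MeasureTheory
open scoped ENNReal NNReal

noncomputable section

/-- The level-`m` cube `K_i^m` in `ℝ^d`:
`K_i^m = {x : |x^(l) - m·i^(l)| ≤ m/2 for all l}`. -/
def cube (d : ℕ) (m : ℝ) (i : Fin d → ℤ) : Set (EuclideanSpace ℝ (Fin d)) :=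
  {x | ∀ l, |x l - m * (i l : ℝ)| ≤ m / 2}

/-- The distance `ρ(A,B) = inf {|x - y| : x ∈ A, y ∈ B}` between two sets. -/
def rho (d : ℕ) (A B : Set (EuclideanSpace ℝ (Fin d))) : ℝ :=
  sInf (Set.image2 dist A B)

/-- The discrete ball `B_i(r)`: the union of the level-1 cubes `K_j^1` with
`ρ(K_i^1, K_j^1) ≤ r` (and `B_i(0) = ∅`). -/
def dball (d : ℕ) (i : Fin d → ℤ) (r : ℝ) : Set (EuclideanSpace ℝ (Fin d)) :=
  if 0 < r then
    ⋃ j ∈ {j : Fin d → ℤ | rho d (cube d 1 i) (cube d 1 j) ≤ r}, cube d 1 j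
  else ∅

/-- `π_d`, the Lebesgue volume of the unit Euclidean ball in `ℝ^d`. -/
def unitBallVol (d : ℕ) : ℝ :=
  (volume (Metric.ball (0 : EuclideanSpace ℝ (Fin d)) 1)).toReal

/-- `β_d = ⌈3 + 2√d · π_d^(1/d)⌉`. -/
def betaD (d : ℕ) : ℝ :=
  (⌈3 + 2 * Real.sqrt d * (unitBallVol d) ^ ((1 : ℝ) / d)⌉ : ℤ)

/-- The embedding of `ℤ^d` into `ℝ^d`. -/
def embedZ (d : ℕ) (i : Fin d → ℤ) : EuclideanSpace ℝ (Fin d) :=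
  WithLp.toLp 2 (fun l => (i l : ℝ))

/-- `A(K_j^m)`: the union of `K_j^m` with its `3^d - 1` neighbouring level-`m`
cubes, i.e. the cubes `K_i^m` with `‖i - j‖_∞ ≤ 1`. -/
def nbhd (d : ℕ) (m : ℝ) (j : Fin d → ℤ) : Set (EuclideanSpace ℝ (Fin d)) :=
  ⋃ i ∈ {i : Fin d → ℤ | ‖i - j‖ ≤ 1}, cube d m i

/-- The radius `R_i(ζ) = inf {r > 0 : Σ_{j : ρ(K_j^1,K_i^1) ≤ β_d r} ζ(j) ≤ π_d r^d}`
if `ζ i > 0` (with `inf ∅ = +∞`, so the value is taken in `ℝ≥0∞`), and `R_i(ζ) = 0`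
if `ζ i = 0`. -/
def Rad (d : ℕ) (ζ : (Fin d → ℤ) → ℕ) (i : Fin d → ℤ) : ℝ≥0∞ :=
  if ζ i = 0 then 0
  else sInf {t : ℝ≥0∞ | ∃ r : ℝ, 0 < r ∧ t = ENNReal.ofReal r ∧
    ((∑ᶠ j ∈ {j : Fin d → ℤ |
        rho d (cube d 1 j) (cube d 1 i) ≤ betaD d * r}, ζ j : ℕ) : ℝ)
      ≤ unitBallVol d * r ^ d}

/-- The sup norm `‖x‖_∞` on `ℝ^d`. -/
def supNorm (d : ℕ) (x : EuclideanSpace ℝ (Fin d)) : ℝ := ⨆ l, |x l|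

lemma center_mem_cube (d : ℕ) (j : Fin d → ℤ) :
    (WithLp.toLp 2 (fun l => (j l : ℝ)) : EuclideanSpace ℝ (Fin d)) ∈ cube d 1 j := by
  intro l; simp

lemma cube_nonempty (d : ℕ) (j : Fin d → ℤ) : (cube d 1 j).Nonempty :=
  ⟨_, center_mem_cube d j⟩

lemma exists_cube_mem (d : ℕ) (y : EuclideanSpace ℝ (Fin d)) :
    ∃ k : Fin d → ℤ, y ∈ cube d 1 k := by
  refine ⟨fun l => ⌊y l + 1/2⌋, fun l => ?_⟩
  have h1 : (⌊y l + 1/2⌋ : ℝ) ≤ y l + 1/2 := Int.floor_le _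
  have h2 : y l + 1/2 - 1 < (⌊y l + 1/2⌋ : ℝ) := Int.sub_one_lt_floor _
  rw [abs_le]
  constructor <;> push_cast <;> linarith

lemma rho_le {d : ℕ} {A B : Set (EuclideanSpace ℝ (Fin d))} {a b}
    (ha : a ∈ A) (hb : b ∈ B) : rho d A B ≤ dist a b := by
  refine csInf_le ⟨0, ?_⟩ (Set.mem_image2_of_mem ha hb)
  rintro x ⟨u, hu, v, hv, rfl⟩
  exact dist_nonneg

lemma le_rho {d : ℕ} {A B : Set (EuclideanSpace ℝ (Fin d))} {c : ℝ}
    (hA : A.Nonempty) (hB : B.Nonempty)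
    (h : ∀ a ∈ A, ∀ b ∈ B, c ≤ dist a b) : c ≤ rho d A B := by
  refine le_csInf (hA.image2 hB) ?_
  rintro x ⟨u, hu, v, hv, rfl⟩
  exact h u hu v hv

lemma dist_le_sqrt_of_mem_cube {d : ℕ} {j : Fin d → ℤ} {z b : EuclideanSpace ℝ (Fin d)}
    (hz : z ∈ cube d 1 j) (hb : b ∈ cube d 1 j) : dist z b ≤ Real.sqrt d := by
  rw [EuclideanSpace.dist_eq]
  have hsum : ∑ l, dist (z l) (b l) ^ 2 ≤ (d : ℝ) := by
    calc ∑ l, dist (z l) (b l) ^ 2 ≤ ∑ _l : Fin d, (1:ℝ) := by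
          refine Finset.sum_le_sum fun l _ => ?_
          have hz' := hz l
          have hb' := hb l
          have hd1 : dist (z l) (b l) ≤ 1 := by
            rw [Real.dist_eq]
            calc |z l - b l| = |(z l - 1 * (j l:ℝ)) - (b l - 1 * (j l:ℝ))| := by ring_nf
              _ ≤ |z l - 1*(j l:ℝ)| + |b l - 1*(j l:ℝ)| := abs_sub _ _
              _ ≤ 1/2 + 1/2 := add_le_add hz' hb'
              _ = 1 := by norm_num
          calc dist (z l) (b l) ^ 2 ≤ 1 ^ 2 := pow_le_pow_left₀ dist_nonneg hd1 2
            _ = 1 := one_pow 2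
      _ = d := by simp
  exact Real.sqrt_le_sqrt hsum

lemma unitBallVol_pos (d : ℕ) (hd : 1 ≤ d) : 0 < unitBallVol d := by
  have h1 : 0 < volume (Metric.ball (0 : EuclideanSpace ℝ (Fin d)) 1) :=
    Metric.measure_ball_pos _ _ one_pos
  have h2 : volume (Metric.ball (0 : EuclideanSpace ℝ (Fin d)) 1) < ⊤ :=
    measure_ball_lt_top
  exact ENNReal.toReal_pos h1.ne' h2.ne


/-- Let `d ≥ 2`, `i ∈ ℤ^d` and `r ≥ π_d^(−1/d)`. Then for every
`z ∈ B_i(r)` and every `y ∈ ℝ^d \ B_i(β_d·r)` one has `|z − y| > r`; in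
particular `ρ(B_i(r), ℝ^d \ B_i(β_d·r)) > r` whenever both sets are nonempty. -/
theorem statement2 (d : ℕ) (hd : 2 ≤ d) (i : Fin d → ℤ) (r : ℝ)
    (hr : (unitBallVol d) ^ (-(1 : ℝ) / d) ≤ r) :
    (∀ z ∈ dball d i r, ∀ y ∉ dball d i (betaD d * r), r < dist z y) ∧
    ((dball d i r).Nonempty → ((dball d i (betaD d * r))ᶜ).Nonempty →
      r < rho d (dball d i r) (dball d i (betaD d * r))ᶜ) := by
  set p : ℝ := (unitBallVol d) ^ ((1 : ℝ) / d) with hp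
  have hvol : 0 < unitBallVol d := unitBallVol_pos d (le_trans one_le_two hd)
  have hppos : 0 < p := Real.rpow_pos_of_pos hvol _
  have hinv : (unitBallVol d) ^ (-(1 : ℝ) / d) = p⁻¹ := by
    rw [hp, ← Real.rpow_neg hvol.le, neg_div]
  have hrpos : 0 < r := lt_of_lt_of_le (by rw [hinv] at hr ⊢; positivity) hr
  have hpr : 1 ≤ p * r := by
    rw [hinv] at hr
    calc (1:ℝ) = p * p⁻¹ := (mul_inv_cancel₀ hppos.ne').symm
      _ ≤ p * r := by exact mul_le_mul_of_nonneg_left hr hppos.le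
  have hsq : 0 ≤ Real.sqrt d := Real.sqrt_nonneg d
  have hbeta : 3 + 2 * Real.sqrt d * p ≤ betaD d := Int.le_ceil _
  have hbetapos : 0 < betaD d * r := by
    have : (0:ℝ) < betaD d := by nlinarith
    positivity
  -- key claim
  have key : ∀ z ∈ dball d i r, ∀ y ∉ dball d i (betaD d * r),
      2 * r + Real.sqrt d ≤ dist z y := by
    intro z hz y hy
    rw [dball, if_pos hrpos] at hz
    obtain ⟨j, hj, hzj⟩ := Set.mem_iUnion₂.mp hz
    have hj : rho d (cube d 1 i) (cube d 1 j) ≤ r := hj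
    obtain ⟨k, hyk⟩ := exists_cube_mem d y
    have hk : betaD d * r < rho d (cube d 1 i) (cube d 1 k) := by
      by_contra h
      push_neg at h
      exact hy (by
        rw [dball, if_pos hbetapos]
        exact Set.mem_iUnion₂.mpr ⟨k, h, hyk⟩)
    -- rho(Ki,Kk) ≤ rho(Ki,Kj) + √d + dist z y
    have hstep : rho d (cube d 1 i) (cube d 1 k) - Real.sqrt d - dist z y
        ≤ rho d (cube d 1 i) (cube d 1 j) := by
      refine le_rho (cube_nonempty d i) (cube_nonempty d j) ?_
      intro a ha b hb
      have h1 : rho d (cube d 1 i) (cube d 1 k) ≤ dist a y := rho_le ha hyk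
      have h2 : dist a y ≤ dist a b + dist b z + dist z y := dist_triangle4 a b z y
      have h3 : dist b z ≤ Real.sqrt d := dist_le_sqrt_of_mem_cube hb hzj
      linarith
    have hd1 : betaD d * r - r - Real.sqrt d < dist z y := by linarith
    nlinarith
  refine ⟨fun z hz y hy => ?_, fun hA hB => ?_⟩
  · have := key z hz y hy
    nlinarith
  · have h := le_rho (c := 2 * r + Real.sqrt d) hA hB
      (fun a ha b hb => key a ha b hb)
    calc r < 2 * r + Real.sqrt d := by nlinarith
      _ ≤ _ := h
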